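/- Let a ≥ 2 and let H be a graph with a vertex partition S_1, ..., S_{a−1} such that d_H(x) ≤ j for every x ∈ S_j (1 ≤ j ≤ a−1). Then there exist a maximal independent set I and a vertex cover C of H with I ∩ C = ∅ and Σ_{j=1}^{a−1} (a−j)c_j ≤ Σ_{j=1}^{a−1} j(a−j)i_j, where c_j = |S_j ∩ C| and i_j = |S_j ∩ I|. -/

import Mathlib

open Finset
open scoped Classical

/-- Degree of a vertex in a simple graph (as `Set.ncard` of its neighbor set). -/
noncomputable def deg {W : Type*} (G : SimpleGraph W) (v : W) : ℕ := (G.neighborSet v).ncard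

/-- `G` has an `[a,b]`-factor: a spanning subgraph `H ≤ G` with `a ≤ deg_H v ≤ b` for all `v`. -/
def HasABFactor {W : Type*} (G : SimpleGraph W) (a b : ℕ) : Prop :=
  ∃ H : SimpleGraph W, H ≤ G ∧ ∀ v, a ≤ deg H v ∧ deg H v ≤ b

/-- Degree of `x` in `G - S` (neighbors of `x` outside `S`). -/
noncomputable def degS {W : Type*} (G : SimpleGraph W) (S : Set W) (x : W) : ℕ :=
  (G.neighborSet x \ S).ncard

/-- Number of isolated vertices of `G - S`. -/
noncomputable def nIso {W : Type*} (G : SimpleGraph W) (S : Set W) : ℕ :=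
  {x | x ∉ S ∧ degS G S x = 0}.ncard

/-- `d_{G-S}(T)`: sum of degrees in `G - S` of the vertices of `T`. -/
noncomputable def dSum {W : Type*} (G : SimpleGraph W) (S T : Set W) : ℕ :=
  ∑ᶠ x ∈ T, degS G S x

/-- `T = {x ∈ V(G) - S : d_{G-S}(x) ≤ a - 1}`. -/
def Tset {W : Type*} (G : SimpleGraph W) (S : Set W) (a : ℕ) : Set W :=
  {x | x ∉ S ∧ degS G S x ≤ a - 1}

/-- Isolated toughness of a graph. -/
noncomputable def isoT {W : Type*} [Fintype W] (G : SimpleGraph W) : ℝ :=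
  if G = ⊤ then (Fintype.card W : ℝ) - 1
  else sInf {r : ℝ | ∃ S : Set W, 2 ≤ nIso G S ∧ r = (S.ncard : ℝ) / (nIso G S : ℝ)}

/-- `I` is an independent set of `G`. -/
def IsIndep {W : Type*} (G : SimpleGraph W) (I : Set W) : Prop :=
  ∀ ⦃x⦄, x ∈ I → ∀ ⦃y⦄, y ∈ I → ¬ G.Adj x y

/-- `I` is a maximal independent set of `G`. -/
def IsMaxIndep {W : Type*} (G : SimpleGraph W) (I : Set W) : Prop :=
  IsIndep G I ∧ ∀ J, IsIndep G J → I ⊆ J → J = I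

/-- `C` is a vertex cover of `G`. -/
def IsCover {W : Type*} (G : SimpleGraph W) (C : Set W) : Prop :=
  ∀ ⦃x y⦄, G.Adj x y → x ∈ C ∨ y ∈ C

theorem stmt_12 {V : Type*} [Fintype V] (H : SimpleGraph V) (a : ℕ) (ha : 2 ≤ a)
    (Sj : ℕ → Set V)
    (hpart : ∀ x : V, ∃! j, j ∈ Finset.Icc 1 (a - 1) ∧ x ∈ Sj j)
    (hdeg : ∀ j ∈ Finset.Icc 1 (a - 1), ∀ x ∈ Sj j, deg H x ≤ j) :
    ∃ I C : Set V, IsMaxIndep H I ∧ IsCover H C ∧ I ∩ C = ∅ ∧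
      ∑ j ∈ Finset.Icc 1 (a - 1), (a - j) * (Sj j ∩ C).ncard ≤
        ∑ j ∈ Finset.Icc 1 (a - 1), j * (a - j) * (Sj j ∩ I).ncard := by
  classical
  -- level function
  set ℓ : V → ℕ := fun x => (hpart x).choose with hℓdef
  have hℓmem : ∀ x, ℓ x ∈ Finset.Icc 1 (a - 1) := fun x => (hpart x).choose_spec.1.1
  have hℓS : ∀ x, x ∈ Sj (ℓ x) := fun x => (hpart x).choose_spec.1.2
  have hℓuniq : ∀ x j, j ∈ Finset.Icc 1 (a - 1) → x ∈ Sj j → j = ℓ x :=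
    fun x j hj hx => (hpart x).choose_spec.2 j ⟨hj, hx⟩
  have hdegℓ : ∀ x, deg H x ≤ ℓ x := fun x => hdeg _ (hℓmem x) x (hℓS x)
  have hℓle : ∀ x, ℓ x ≤ a - 1 := fun x => (Finset.mem_Icc.mp (hℓmem x)).2
  have hℓge : ∀ x, 1 ≤ ℓ x := fun x => (Finset.mem_Icc.mp (hℓmem x)).1
  set M : ℕ := Fintype.card V + 1 with hM
  have hM1 : 1 ≤ M := Nat.le_add_left 1 _
  set w : Finset V → ℕ := fun F => ∑ x ∈ F, M ^ (a - 1 - ℓ x) with hw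
  -- choose an independent finset maximizing w
  obtain ⟨F, hFindep, hFmax⟩ :
      ∃ F : Finset V, IsIndep H (↑F : Set V) ∧
        ∀ G : Finset V, IsIndep H (↑G : Set V) → w G ≤ w F := by
    obtain ⟨F, hF, hmax⟩ := Finset.exists_max_image
      (Finset.univ.filter fun F : Finset V => IsIndep H (↑F : Set V)) w
      ⟨∅, by simp [IsIndep]⟩
    refine ⟨F, (Finset.mem_filter.mp hF).2, fun G hG => hmax G ?_⟩
    exact Finset.mem_filter.mpr ⟨Finset.mem_univ _, hG⟩
  -- maximality as a set
  have hIsMax : IsMaxIndep H (↑F : Set V) := by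
    refine ⟨hFindep, fun J hJ hsub => ?_⟩
    by_contra hne
    have hJfin : J.Finite := Set.toFinite J
    have hFsub : F ⊆ hJfin.toFinset := fun x hx => hJfin.mem_toFinset.mpr (hsub hx)
    obtain ⟨v, hvJ, hvF⟩ : ∃ v ∈ J, v ∉ (↑F : Set V) := by
      by_contra h
      push_neg at h
      exact hne (le_antisymm h hsub)
    have hlt : w F < w hJfin.toFinset := by
      refine Finset.sum_lt_sum_of_subset hFsub (i := v) (hJfin.mem_toFinset.mpr hvJ)
        (by simpa using hvF) (Nat.pos_of_ne_zero (by positivity)) (fun _ _ _ => Nat.zero_le _)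
    have : IsIndep H (↑hJfin.toFinset : Set V) := by
      intro x hx y hy
      exact hJ (by simpa using hx) (by simpa using hy)
    exact absurd (hFmax _ this) (not_le.mpr hlt)
  -- key property: every vertex outside F has a neighbor in F of smaller-or-equal level
  have hkey : ∀ x, x ∉ F → ∃ y ∈ F, H.Adj x y ∧ ℓ y ≤ ℓ x := by
    intro x hx
    by_contra hcon
    push_neg at hcon
    have hbig : ∀ y ∈ F, H.Adj x y → ℓ x + 1 ≤ ℓ y := fun y hy hadj =>
      Nat.succ_le_of_lt (hcon y hy hadj)
    -- F' = insert x (non-neighbors of x in F)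
    set F' : Finset V := insert x (F.filter fun y => ¬ H.Adj x y) with hF'
    have hF'indep : IsIndep H (↑F' : Set V) := by
      intro u hu v hv hadj
      simp only [hF', Finset.coe_insert, Set.mem_insert_iff, Finset.mem_coe,
        Finset.mem_filter] at hu hv
      rcases hu with rfl | ⟨huF, hun⟩
      · rcases hv with rfl | ⟨hvF, hvn⟩
        · exact H.loopless.irrefl _ hadj
        · exact hvn hadj
      · rcases hv with rfl | ⟨hvF, hvn⟩
        · exact hun hadj.symm
        · exact hFindep huF hvF hadj
    have hxnot : x ∉ F.filter fun y => ¬ H.Adj x y := fun h => hx (Finset.mem_filter.mp h).1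
    have hsplit : w F = (∑ y ∈ F.filter (fun y => H.Adj x y), M ^ (a - 1 - ℓ y)) +
        ∑ y ∈ F.filter (fun y => ¬ H.Adj x y), M ^ (a - 1 - ℓ y) := by
      rw [hw]
      exact (Finset.sum_filter_add_sum_filter_not F _ _).symm
    have hwF' : w F' = M ^ (a - 1 - ℓ x) +
        ∑ y ∈ F.filter (fun y => ¬ H.Adj x y), M ^ (a - 1 - ℓ y) := by
      simp only [hw, hF', Finset.sum_insert hxnot]
    have hle : w F' ≤ w F := hFmax F' hF'indep
    have hSyes : M ^ (a - 1 - ℓ x) ≤ ∑ y ∈ F.filter (fun y => H.Adj x y), M ^ (a - 1 - ℓ y) := by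
      omega
    rcases Finset.eq_empty_or_nonempty (F.filter (fun y => H.Adj x y)) with hemp | ⟨y0, hy0⟩
    · rw [hemp, Finset.sum_empty] at hSyes
      have : 0 < M ^ (a - 1 - ℓ x) := by positivity
      omega
    · have hy0' := Finset.mem_filter.mp hy0
      have hx2 : ℓ x + 1 ≤ a - 1 := le_trans (hbig y0 hy0'.1 hy0'.2) (hℓle y0)
      have hbound : ∑ y ∈ F.filter (fun y => H.Adj x y), M ^ (a - 1 - ℓ y) ≤
          F.card * M ^ (a - 1 - (ℓ x + 1)) := by
        calc ∑ y ∈ F.filter (fun y => H.Adj x y), M ^ (a - 1 - ℓ y)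
            ≤ ∑ _y ∈ F.filter (fun y => H.Adj x y), M ^ (a - 1 - (ℓ x + 1)) := by
              refine Finset.sum_le_sum fun y hy => ?_
              have hy' := Finset.mem_filter.mp hy
              exact Nat.pow_le_pow_right hM1 (Nat.sub_le_sub_left (hbig y hy'.1 hy'.2) _)
          _ = (F.filter (fun y => H.Adj x y)).card * M ^ (a - 1 - (ℓ x + 1)) := by
              rw [Finset.sum_const, smul_eq_mul]
          _ ≤ F.card * M ^ (a - 1 - (ℓ x + 1)) := by
              exact Nat.mul_le_mul_right _ (Finset.card_filter_le _ _)
      have hcard : F.card ≤ M - 1 := by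
        have := Finset.card_le_univ F
        omega
      have hpow : (M - 1) * M ^ (a - 1 - (ℓ x + 1)) < M ^ (a - 1 - ℓ x) := by
        have he : a - 1 - ℓ x = (a - 1 - (ℓ x + 1)) + 1 := by omega
        rw [he, pow_succ]
        have hMpos : 0 < M ^ (a - 1 - (ℓ x + 1)) := by positivity
        rw [mul_comm (M - 1)]
        exact mul_lt_mul_of_pos_left (by omega : M - 1 < M) hMpos
      have : M ^ (a - 1 - ℓ x) < M ^ (a - 1 - ℓ x) :=
        lt_of_le_of_lt (le_trans hSyes (le_trans hbound
          (Nat.mul_le_mul_right _ hcard))) hpow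
      exact absurd this (lt_irrefl _)
  -- set up I and C
  refine ⟨(↑F : Set V), (↑F : Set V)ᶜ, hIsMax, ?_, Set.inter_compl_self _, ?_⟩
  · intro x y hadj
    by_contra h
    push_neg at h
    simp only [Set.notMem_compl_iff, Finset.mem_coe] at h
    exact hFindep h.1 h.2 hadj
  -- the counting
  · -- conversion lemma : sums over levels = sums over vertices
    have hconv : ∀ (A : Set V) (g : ℕ → ℕ),
        ∑ j ∈ Finset.Icc 1 (a - 1), g j * (Sj j ∩ A).ncard =
          ∑ x ∈ A.toFinset, g (ℓ x) := by
      intro A g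
      rw [← Finset.sum_fiberwise_of_maps_to' (g := ℓ) (t := Finset.Icc 1 (a - 1))
        (fun x _ => hℓmem x) g]
      refine Finset.sum_congr rfl fun j hj => ?_
      have hset : Sj j ∩ A = ↑(A.toFinset.filter fun x => ℓ x = j) := by
        ext x
        simp only [Set.mem_inter_iff, Finset.coe_filter, Set.mem_setOf_eq,
          Set.mem_toFinset]
        constructor
        · rintro ⟨hS, hA⟩; exact ⟨hA, (hℓuniq x j hj hS).symm⟩
        · rintro ⟨hA, rfl⟩; exact ⟨hℓS x, hA⟩
      rw [hset, Set.ncard_coe_finset, Finset.sum_const, smul_eq_mul, mul_comm]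
    have hC : ((↑F : Set V)ᶜ).toFinset = Finset.univ \ F := by
      ext x; simp
    rw [hconv _ (fun j => a - j), hconv _ (fun j => j * (a - j))]
    -- choose the assignment
    simp only [Set.toFinset_compl, Finset.toFinset_coe]
    set f : V → V := fun x => if h : x ∉ F then (hkey x h).choose else x with hf
    have hfF : ∀ x ∉ F, f x ∈ F := by
      intro x hx; simp only [hf, dif_pos hx]; exact (hkey x hx).choose_spec.1
    have hfAdj : ∀ x ∉ F, H.Adj x (f x) := by
      intro x hx; simp only [hf, dif_pos hx]; exact (hkey x hx).choose_spec.2.1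
    have hfℓ : ∀ x ∉ F, ℓ (f x) ≤ ℓ x := by
      intro x hx; simp only [hf, dif_pos hx]; exact (hkey x hx).choose_spec.2.2
    set Cfin : Finset V := Fᶜ with hCf
    have hCmem : ∀ x ∈ Cfin, x ∉ F := by intro x hx; simpa [hCf] using hx
    calc ∑ x ∈ Cfin, (a - ℓ x)
        ≤ ∑ x ∈ Cfin, (a - ℓ (f x)) := by
          refine Finset.sum_le_sum fun x hx => ?_
          exact Nat.sub_le_sub_left (hfℓ x (hCmem x hx)) a
      _ = ∑ y ∈ F, ∑ x ∈ Cfin.filter (fun x => f x = y), (a - ℓ (f x)) := by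
          rw [Finset.sum_fiberwise_of_maps_to (fun x hx => hfF x (hCmem x hx))]
      _ = ∑ y ∈ F, (Cfin.filter (fun x => f x = y)).card * (a - ℓ y) := by
          refine Finset.sum_congr rfl fun y hy => ?_
          rw [Finset.sum_congr rfl (fun x hx => by
            rw [(Finset.mem_filter.mp hx).2]), Finset.sum_const, smul_eq_mul]
      _ ≤ ∑ y ∈ F, ℓ y * (a - ℓ y) := by
          refine Finset.sum_le_sum fun y hy => ?_
          refine Nat.mul_le_mul_right _ ?_
          have hsub : Cfin.filter (fun x => f x = y) ⊆ H.neighborFinset y := by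
            intro x hx
            have hx' := Finset.mem_filter.mp hx
            have := hfAdj x (hCmem x hx'.1)
            rw [hx'.2] at this
            exact (H.mem_neighborFinset y x).mpr this.symm
          have hdy : deg H y = (H.neighborFinset y).card := by
            rw [deg, SimpleGraph.neighborFinset_def, Set.ncard_eq_toFinset_card']
          calc (Cfin.filter (fun x => f x = y)).card
              ≤ (H.neighborFinset y).card := Finset.card_le_card hsub
            _ = deg H y := hdy.symm
            _ ≤ ℓ y := hdegℓ y
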